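/- The theory T_2n has no additive pre-witness: there is no function wit from quantifier-free Σ_P-formulas to quantifier-free Σ_P-formulas that is simultaneously a pre-witness for T_2n and additive for T_2n. (In particular, T_2n is not additively polite; the computability requirement on the witness is not needed for this impossibility.) -/

import Mathlib

open FirstOrder FirstOrder.Language

/-- The signature Σ_P with a single unary predicate symbol `P`. -/
def LP : FirstOrder.Language :=
  ⟨fun _ => Empty, fun n => match n with | 1 => Unit | _ => Empty⟩

/-- The unary predicate symbol of `LP`. -/
def PSymb : LP.Relations 1 := Unit.unit

/-- The interpretation of the predicate symbol `P` in an `LP`-structure. -/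
def PPred (M : Type) (inst : LP.Structure M) (a : M) : Prop :=
  inst.RelMap PSymb ![a]

/-- Realization of a formula, with the structure instance given explicitly. -/
def RealizeP {α : Type} (M : Type) (inst : LP.Structure M) (φ : LP.Formula α) (v : α → M) : Prop :=
  letI := inst
  φ.Realize v

/-- `M` is a model of T_2n, axiomatized by `{ψ_n^P → ψ_{≥2n} : n ≥ 1}`: if there are at
least `n` distinct elements satisfying `P`, then there are at least `2n` elements. -/
def ModelT2n (M : Type) (inst : LP.Structure M) : Prop :=
  ∀ n : ℕ, 1 ≤ n →
    (∃ x : Fin n → M, Function.Injective x ∧ ∀ i, PPred M inst (x i)) →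
    ∃ y : Fin (2 * n) → M, Function.Injective y

/-- `φ` is a conjunction of flat literals all of whose terms are variables:
literals of the form `P(v)`, `¬P(v)`, `v = w`, or `v ≠ w`. -/
inductive IsFlatConjP : LP.Formula ℕ → Prop
  | pos (v : ℕ) : IsFlatConjP (Relations.formula₁ PSymb (Term.var v))
  | neg (v : ℕ) : IsFlatConjP (Relations.formula₁ PSymb (Term.var v)).not
  | varEq (v w : ℕ) : IsFlatConjP (Term.equal (Term.var v) (Term.var w))
  | varNe (v w : ℕ) : IsFlatConjP (Term.equal (Term.var v) (Term.var w)).not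
  | conj (φ ψ : LP.Formula ℕ) : IsFlatConjP φ → IsFlatConjP ψ → IsFlatConjP (φ ⊓ ψ)

/-- `wit` is a pre-witness for T_2n: it maps quantifier-free formulas to quantifier-free
formulas; `φ` and `∃x⃗. wit(φ)` (where `x⃗ = vars(wit(φ)) \ vars(φ)`) hold in exactly the
same models-with-valuations of T_2n; and if `wit(φ)` is satisfiable in a model of T_2n,
then `φ` is satisfied in some model of T_2n under a valuation in which every element of
the domain is the value of some variable of `wit(φ)`. -/
def IsPreWitness (wit : LP.Formula ℕ → LP.Formula ℕ) : Prop :=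
  (∀ φ : LP.Formula ℕ, φ.IsQF → (wit φ).IsQF) ∧
  (∀ φ : LP.Formula ℕ, φ.IsQF →
    ∀ (M : Type) (inst : LP.Structure M), ModelT2n M inst → ∀ v : ℕ → M,
      (RealizeP M inst φ v ↔
        ∃ w : ℕ → M, (∀ x : ℕ, x ∉ (wit φ).freeVarFinset \ φ.freeVarFinset → w x = v x) ∧
          RealizeP M inst (wit φ) w)) ∧
  (∀ φ : LP.Formula ℕ, φ.IsQF →
    (∃ (M : Type) (inst : LP.Structure M), ModelT2n M inst ∧
      ∃ v : ℕ → M, RealizeP M inst (wit φ) v) →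
    ∃ (M : Type) (inst : LP.Structure M), ModelT2n M inst ∧
      ∃ v : ℕ → M, RealizeP M inst φ v ∧ ∀ a : M, ∃ x ∈ (wit φ).freeVarFinset, v x = a)

/-- `wit` is additive for T_2n: for quantifier-free `φ` and conjunctions `ψ` of flat
literals all of whose terms are variables, `wit(wit(φ) ∧ ψ)` and `wit(φ) ∧ ψ` hold in
exactly the same models-with-valuations of T_2n and have the same set of variables. -/
def IsAdditive (wit : LP.Formula ℕ → LP.Formula ℕ) : Prop :=
  ∀ φ ψ : LP.Formula ℕ, φ.IsQF → IsFlatConjP ψ →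
    (∀ (M : Type) (inst : LP.Structure M), ModelT2n M inst → ∀ v : ℕ → M,
      (RealizeP M inst (wit (wit φ ⊓ ψ)) v ↔ RealizeP M inst (wit φ ⊓ ψ) v)) ∧
    (wit (wit φ ⊓ ψ)).freeVarFinset = (wit φ ⊓ ψ).freeVarFinset

def patom (v : ℕ) : LP.Formula ℕ := Relations.formula₁ PSymb (Term.var v)
def pneq (v w : ℕ) : LP.Formula ℕ := (Term.equal (Term.var v) (Term.var w)).not

variable {M : Type} (inst : LP.Structure M)

theorem realizeP_inf {φ ψ : LP.Formula ℕ} {v : ℕ → M} :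
    RealizeP M inst (φ ⊓ ψ) v ↔ RealizeP M inst φ v ∧ RealizeP M inst ψ v := by
  letI := inst; exact Formula.realize_inf

theorem realizeP_patom {x : ℕ} {v : ℕ → M} :
    RealizeP M inst (patom x) v ↔ PPred M inst (v x) := by
  letI := inst
  simp [RealizeP, patom, PPred, Formula.realize_rel₁]

theorem realizeP_pneq {x y : ℕ} {v : ℕ → M} :
    RealizeP M inst (pneq x y) v ↔ v x ≠ v y := by
  letI := inst
  simp [RealizeP, pneq, Formula.realize_not, Formula.realize_equal]

theorem realizeP_top {v : ℕ → M} : RealizeP M inst (⊤ : LP.Formula ℕ) v := by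
  letI := inst; exact Formula.realize_top.2 trivial

theorem fv_inf (φ ψ : LP.Formula ℕ) :
    (φ ⊓ ψ).freeVarFinset = φ.freeVarFinset ∪ ψ.freeVarFinset := by
  simp [Min.min, BoundedFormula.not]

theorem fv_patom (x : ℕ) : (patom x).freeVarFinset = {x} := by
  simp [patom, Relations.formula₁, Relations.formula, Relations.boundedFormula, Term.relabel,
    Term.varFinsetLeft]

theorem fv_pneq (x y : ℕ) : (pneq x y).freeVarFinset = {x, y} := by
  simp [pneq, Term.equal, Term.bdEqual, BoundedFormula.not, BoundedFormula.equal, Term.relabel,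
    Term.varFinsetLeft]

theorem fv_top : (⊤ : LP.Formula ℕ).freeVarFinset = ∅ := by
  simp [Top.top, BoundedFormula.not]

theorem qf_patom (x : ℕ) : (patom x).IsQF :=
  (BoundedFormula.IsAtomic.rel _ _).isQF

theorem qf_pneq (x y : ℕ) : (pneq x y).IsQF :=
  (BoundedFormula.IsAtomic.equal _ _).isQF.not

/-- `diseqs w N k` asserts `v (N+i) ≠ v w` for all `i ≤ k`. -/
def diseqs (w N : ℕ) : ℕ → LP.Formula ℕ
  | 0 => pneq N w
  | k+1 => diseqs w N k ⊓ pneq (N+(k+1)) w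

/-- `chain N k` asserts `P (v (N+i))` for `i ≤ k` and pairwise distinctness. -/
def chain (N : ℕ) : ℕ → LP.Formula ℕ
  | 0 => patom N
  | k+1 => (chain N k ⊓ patom (N+(k+1))) ⊓ diseqs (N+(k+1)) N k

theorem flat_diseqs (w N k : ℕ) : IsFlatConjP (diseqs w N k) := by
  induction k with
  | zero => exact IsFlatConjP.varNe _ _
  | succ k ih => exact IsFlatConjP.conj _ _ ih (IsFlatConjP.varNe _ _)

theorem flat_chain (N k : ℕ) : IsFlatConjP (chain N k) := by
  induction k with
  | zero => exact IsFlatConjP.pos _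
  | succ k ih =>
    exact IsFlatConjP.conj _ _ (IsFlatConjP.conj _ _ ih (IsFlatConjP.pos _)) (flat_diseqs _ _ _)

theorem qf_of_flat {φ : LP.Formula ℕ} (h : IsFlatConjP φ) : φ.IsQF := by
  induction h with
  | pos v => exact qf_patom v
  | neg v => exact (qf_patom v).not
  | varEq v w => exact (BoundedFormula.IsAtomic.equal _ _).isQF
  | varNe v w => exact qf_pneq v w
  | conj φ ψ _ _ ih1 ih2 => exact ih1.inf ih2

theorem realize_diseqs {w N k : ℕ} {v : ℕ → M} :
    RealizeP M inst (diseqs w N k) v ↔ ∀ i ≤ k, v (N+i) ≠ v w := by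
  induction k with
  | zero =>
    simp only [diseqs, realizeP_pneq]
    constructor
    · intro h i hi
      obtain rfl : i = 0 := Nat.le_zero.1 hi
      simpa using h
    · intro h; simpa using h 0 le_rfl
  | succ k ih =>
    simp only [diseqs, realizeP_inf, realizeP_pneq, ih]
    constructor
    · rintro ⟨h1, h2⟩ i hi
      rcases Nat.lt_or_ge i (k+1) with hl | hl
      · exact h1 i (Nat.lt_succ_iff.1 hl)
      · obtain rfl : i = k+1 := le_antisymm hi hl
        exact h2
    · intro h
      exact ⟨fun i hi => h i (hi.trans (Nat.le_succ k)), h (k+1) le_rfl⟩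

theorem realize_chain {N k : ℕ} {v : ℕ → M} :
    RealizeP M inst (chain N k) v ↔
      (∀ i ≤ k, PPred M inst (v (N+i))) ∧ ∀ i j, i < j → j ≤ k → v (N+i) ≠ v (N+j) := by
  induction k with
  | zero =>
    simp only [chain, realizeP_patom]
    constructor
    · intro h
      refine ⟨fun i hi => ?_, fun i j hij hj => by omega⟩
      obtain rfl : i = 0 := Nat.le_zero.1 hi
      simpa using h
    · intro ⟨h, _⟩; simpa using h 0 le_rfl
  | succ k ih =>
    simp only [chain, realizeP_inf, realizeP_patom, ih, realize_diseqs]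
    constructor
    · rintro ⟨⟨⟨hP, hd⟩, hPk⟩, hne⟩
      refine ⟨fun i hi => ?_, fun i j hij hj => ?_⟩
      · rcases Nat.lt_or_ge i (k+1) with hl | hl
        · exact hP i (Nat.lt_succ_iff.1 hl)
        · obtain rfl : i = k+1 := le_antisymm hi hl
          exact hPk
      · rcases Nat.lt_or_ge j (k+1) with hl | hl
        · exact hd i j hij (Nat.lt_succ_iff.1 hl)
        · obtain rfl : j = k+1 := le_antisymm hj hl
          exact hne i (by omega)
    · rintro ⟨hP, hd⟩
      exact ⟨⟨⟨fun i hi => hP i (by omega), fun i j hij hj => hd i j hij (by omega)⟩,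
        hP (k+1) le_rfl⟩, fun i hi => hd i (k+1) (by omega) le_rfl⟩

theorem fv_diseqs (w N k : ℕ) :
    (diseqs w N k).freeVarFinset ⊆ insert w ((Finset.range (k+1)).image (N + ·)) := by
  induction k with
  | zero =>
    rw [diseqs, fv_pneq]
    intro x hx
    rcases Finset.mem_insert.1 hx with rfl | hx
    · exact Finset.mem_insert_of_mem (Finset.mem_image.2 ⟨0, by simp⟩)
    · obtain rfl := Finset.mem_singleton.1 hx
      exact Finset.mem_insert_self _ _
  | succ k ih =>
    rw [diseqs, fv_inf, fv_pneq]
    intro x hx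
    rcases Finset.mem_union.1 hx with hx | hx
    · rcases Finset.mem_insert.1 (ih hx) with rfl | h
      · exact Finset.mem_insert_self _ _
      · rcases Finset.mem_image.1 h with ⟨a, ha, rfl⟩
        refine Finset.mem_insert_of_mem (Finset.mem_image.2 ⟨a, ?_, rfl⟩)
        simp only [Finset.mem_range] at ha ⊢
        omega
    · rcases Finset.mem_insert.1 hx with rfl | hx
      · exact Finset.mem_insert_of_mem (Finset.mem_image.2 ⟨k+1, by simp, rfl⟩)
      · obtain rfl := Finset.mem_singleton.1 hx
        exact Finset.mem_insert_self _ _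

theorem fv_chain (N k : ℕ) :
    (chain N k).freeVarFinset ⊆ (Finset.range (k+1)).image (N + ·) := by
  induction k with
  | zero =>
    rw [chain, fv_patom]
    intro x hx
    simp only [Finset.mem_singleton] at hx
    subst hx
    exact Finset.mem_image.2 ⟨0, by simp⟩
  | succ k ih =>
    rw [chain, fv_inf, fv_inf, fv_patom]
    intro x hx
    simp only [Finset.mem_union, Finset.mem_singleton] at hx
    simp only [Finset.mem_image, Finset.mem_range]
    rcases hx with (hx | rfl) | hx
    · rcases Finset.mem_image.1 (ih hx) with ⟨a, ha, rfl⟩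
      exact ⟨a, by simp at ha; omega, rfl⟩
    · exact ⟨k+1, by omega, rfl⟩
    · rcases Finset.mem_insert.1 (fv_diseqs _ _ _ hx) with rfl | h
      · exact ⟨k+1, by omega, rfl⟩
      · rcases Finset.mem_image.1 h with ⟨a, ha, rfl⟩
        exact ⟨a, by simp at ha; omega, rfl⟩

def instN : LP.Structure ℕ := ⟨fun f => f.elim, fun _ _ => True⟩

theorem hmodN : ModelT2n ℕ instN := by
  intro n _ _
  exact ⟨fun i => i.val, fun i j h => Fin.val_injective h⟩

/-- The theory T_2n has no additive pre-witness. -/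
theorem stmt_10 :
    ¬ ∃ wit : LP.Formula ℕ → LP.Formula ℕ, IsPreWitness wit ∧ IsAdditive wit := by
  classical
  rintro ⟨wit, ⟨hqf, hw1, hw2⟩, hadd⟩
  set S := (wit ⊤).freeVarFinset with hS
  set s := S.card with hs
  set N := S.sup id + 1 with hNdef
  have hN : ∀ i : ℕ, N + i ∉ S := by
    intro i h
    have : id (N + i) ≤ S.sup id := Finset.le_sup h
    simp only [id] at this
    omega
  have qtop : (⊤ : LP.Formula ℕ).IsQF := BoundedFormula.IsQF.top
  have qψ : (chain N s).IsQF := qf_of_flat (flat_chain N s)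
  have qφ' : (wit ⊤ ⊓ chain N s).IsQF := (hqf ⊤ qtop).inf qψ
  obtain ⟨hiff, hfv⟩ := hadd ⊤ (chain N s) qtop (flat_chain N s)
  -- satisfiability of wit (wit ⊤ ⊓ chain N s) in the model ℕ
  obtain ⟨w, hwagree, hwreal⟩ :=
    (hw1 ⊤ qtop ℕ instN hmodN id).1 (realizeP_top instN)
  have hwfix : ∀ i : ℕ, w (N + i) = N + i := by
    intro i
    have : (N + i) ∉ (wit ⊤).freeVarFinset \ (⊤ : LP.Formula ℕ).freeVarFinset := by
      rw [fv_top, Finset.sdiff_empty]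
      exact hN i
    exact hwagree _ this
  have hwψ : RealizeP ℕ instN (chain N s) w := by
    rw [realize_chain]
    refine ⟨fun i _ => trivial, fun i j hij hj h => ?_⟩
    rw [hwfix i, hwfix j] at h
    omega
  have hsat : ∃ (M : Type) (inst : LP.Structure M), ModelT2n M inst ∧
      ∃ v : ℕ → M, RealizeP M inst (wit (wit ⊤ ⊓ chain N s)) v :=
    ⟨ℕ, instN, hmodN, w, (hiff ℕ instN hmodN w).2 ((realizeP_inf instN).2 ⟨hwreal, hwψ⟩)⟩
  obtain ⟨M, instM, hM, v, hφ'v, hcov⟩ := hw2 _ qφ' hsat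
  obtain ⟨_, hre2⟩ := (realizeP_inf instM).1 hφ'v
  obtain ⟨hP, hd⟩ := (realize_chain instM).1 hre2
  -- the model has at least 2*(s+1) elements
  obtain ⟨y, hy⟩ := hM (s+1) (by omega) ⟨fun i => v (N + i.val), by
    constructor
    · intro i j h
      by_contra hne
      rcases Nat.lt_or_ge i.val j.val with hl | hl
      · exact hd i.val j.val hl (by omega) h
      · have hl' : j.val < i.val := lt_of_le_of_ne hl (fun e => hne (Fin.ext e.symm))
        exact hd j.val i.val hl' (by omega) h.symm
    · exact fun i => hP i.val (by omega)⟩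
  -- but every element is the value of one of at most 2s+1 variables
  have hcov' : ∀ a : M, a ∈ ((wit ⊤ ⊓ chain N s).freeVarFinset).image v := by
    intro a
    obtain ⟨x, hx1, hx2⟩ := hcov a
    rw [hfv] at hx1
    exact Finset.mem_image.2 ⟨x, hx1, hx2⟩
  have h2k : 2*(s+1) ≤ (((wit ⊤ ⊓ chain N s).freeVarFinset).image v).card := by
    have hsub : (Finset.univ.image y) ⊆ ((wit ⊤ ⊓ chain N s).freeVarFinset).image v :=
      fun a _ => hcov' a
    calc 2*(s+1) = (Finset.univ.image y).card := by
          rw [Finset.card_image_of_injective _ hy, Finset.card_univ, Fintype.card_fin]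
      _ ≤ _ := Finset.card_le_card hsub
  have hcard : ((wit ⊤ ⊓ chain N s).freeVarFinset).card ≤ s + (s+1) := by
    rw [fv_inf]
    refine (Finset.card_union_le _ _).trans (add_le_add le_rfl ?_)
    refine (Finset.card_le_card (fv_chain N s)).trans ?_
    exact Finset.card_image_le.trans (by simp)
  have := (Finset.card_image_le (s := (wit ⊤ ⊓ chain N s).freeVarFinset) (f := v)).trans hcard
  omega
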